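/- Fix n ≥ 0. Let V_n be the free ℤ/2-module with basis M_n = {(R,m,t) ∈ (ℕ →₀ ℕ) × ℤ × ℤ : R i = 0 for all i > n}, and let d : V_n → V_n be the ℤ/2-linear map sending a basis element x = (R,m,t) to Φ(x) when m ≠ 0, v₂(m) ≤ n, and R i = 0 for every i < v₂(m), and to 0 otherwise. Then d ∘ d = 0, and ker d / im d is a free ℤ/2-module with basis the classes of the elements (0, 2^(n+1)·k, t) for (k,t) ∈ ℤ × ℤ; in particular ker d / im d is isomorphic as a ℤ/2-module to the Laurent polynomial ring ℤ/2[x, x⁻¹, y, y⁻¹] (the Tate coefficients t(BPℝ⟨n⟩)_⋆ = ℤ/2[σ^(2^(n+1)), σ^(−2^(n+1)), a, a⁻¹] of Theorem 2.1(1), with x = σ^(2^(n+1)) and y = a). -/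

import Mathlib

noncomputable def v2 (m : ℤ) : ℕ := padicValInt 2 m

noncomputable def Φ : (ℕ →₀ ℕ) × ℤ × ℤ → (ℕ →₀ ℕ) × ℤ × ℤ := fun x =>
  (x.1 + Finsupp.single (v2 x.2.1) 1,
   x.2.1 + 2 ^ v2 x.2.1,
   x.2.2 + 2 ^ (v2 x.2.1 + 1) - 1)

def M (n : ℕ) : Type := {x : (ℕ →₀ ℕ) × ℤ × ℤ // ∀ i > n, x.1 i = 0}

-- arithmetic (already checked)
lemma v2_dvd (m : ℤ) : (2:ℤ) ^ v2 m ∣ m := by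
  simpa [v2] using padicValInt_dvd (p := 2) m
lemma dvd_iff_le_v2 {m : ℤ} {s : ℕ} : (2:ℤ) ^ s ∣ m ↔ m = 0 ∨ s ≤ v2 m := by
  simpa [v2] using padicValInt_dvd_iff (p := 2) s m
lemma v2_not_dvd {m : ℤ} (hm : m ≠ 0) : ¬ (2:ℤ) ^ (v2 m + 1) ∣ m := by
  rw [dvd_iff_le_v2]; simp [hm]
lemma v2_eq {m : ℤ} {s : ℕ} (h1 : (2:ℤ) ^ s ∣ m) (h2 : ¬ (2:ℤ) ^ (s+1) ∣ m) : v2 m = s := by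
  have hm : m ≠ 0 := by rintro rfl; exact h2 (dvd_zero _)
  have a := dvd_iff_le_v2.mp h1
  have b := (dvd_iff_le_v2 (m := m) (s := s+1)).not.mp h2
  push_neg at b
  omega
lemma dvd_add_pow {m : ℤ} (hm : m ≠ 0) : (2:ℤ) ^ (v2 m + 1) ∣ m + 2 ^ v2 m := by
  obtain ⟨l, hl⟩ := v2_dvd m
  set s := v2 m with hs
  have hlodd : ¬ (2:ℤ) ∣ l := by
    intro ⟨j, hj⟩
    exact v2_not_dvd hm ⟨j, by show m = 2^(s+1)*j; rw [hl, hj]; ring⟩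
  have h2 : (2:ℤ) ∣ l + 1 := by omega
  obtain ⟨j, hj⟩ := h2
  exact ⟨j, by rw [hl]; linear_combination (2:ℤ)^s * hj⟩
lemma sub_pow_ne_zero {m : ℤ} {s : ℕ} (h : (2:ℤ) ^ (s+1) ∣ m) : m - 2 ^ s ≠ 0 := by
  intro h0
  have hm : m = 2 ^ s := by omega
  rw [hm, pow_succ] at h
  have := Int.le_of_dvd (by positivity) h
  nlinarith [pow_pos (show (0:ℤ) < 2 by norm_num) s]
lemma v2_sub_pow {m : ℤ} {s : ℕ} (h : (2:ℤ) ^ (s+1) ∣ m) : v2 (m - 2 ^ s) = s := by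
  obtain ⟨j, hj⟩ := h
  apply v2_eq
  · exact ⟨2*j - 1, by rw [hj]; ring⟩
  · rintro ⟨c, hc⟩
    have h2 : (2:ℤ)^s * (2*j - 1) = 2^s * (2 * c) := by linear_combination hc - hj
    have h3 := mul_left_cancel₀ (a := (2:ℤ)^s) (by positivity) h2
    omega
lemma v2_big {n : ℕ} {k : ℤ} (hk : k ≠ 0) : n < v2 (2 ^ (n+1) * k) := by
  have h1 : (2:ℤ)^(n+1) ∣ 2^(n+1) * k := ⟨k, rfl⟩
  have h2 := dvd_iff_le_v2.mp h1
  have hne : (2:ℤ)^(n+1) * k ≠ 0 := by positivity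
  omega

-- least nonzero index
lemma exists_idx {R : ℕ →₀ ℕ} (h : R ≠ 0) : ∃ i, R i ≠ 0 := by
  by_contra hc; push_neg at hc; exact h (Finsupp.ext fun i => hc i)

def μ (R : ℕ →₀ ℕ) (h : R ≠ 0) : ℕ := Nat.find (exists_idx h)

lemma μ_spec {R : ℕ →₀ ℕ} (h : R ≠ 0) : R (μ R h) ≠ 0 := Nat.find_spec (exists_idx h)

lemma μ_min {R : ℕ →₀ ℕ} (h : R ≠ 0) {i : ℕ} (hi : i < μ R h) : R i = 0 := by
  have := Nat.find_min (exists_idx h) hi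
  simpa using this

lemma μ_add_single {R : ℕ →₀ ℕ} {s : ℕ} (h0 : ∀ i < s, R i = 0)
    (h : R + Finsupp.single s 1 ≠ 0) : μ (R + Finsupp.single s 1) h = s := by
  unfold μ
  apply le_antisymm
  · apply Nat.find_le
    simp [Finsupp.add_apply, Finsupp.single_apply]
  · rw [Nat.le_find_iff]
    intro i hi
    simp only [ne_eq, not_not, Finsupp.add_apply, Finsupp.single_apply, if_neg (by omega : ¬ s = i),
      h0 i hi, add_zero]

-- the three classes
abbrev Active (n : ℕ) (x : M n) : Prop :=
  x.1.2.1 ≠ 0 ∧ v2 x.1.2.1 ≤ n ∧ ∀ i < v2 x.1.2.1, x.1.1 i = 0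

def Hit (n : ℕ) (y : M n) : Prop :=
  ∃ h : y.1.1 ≠ 0, (2:ℤ) ^ (μ y.1.1 h + 1) ∣ y.1.2.1

def Surv (n : ℕ) (x : M n) : Prop := x.1.1 = 0 ∧ (2:ℤ) ^ (n+1) ∣ x.1.2.1

noncomputable def ΦM (n : ℕ) (x : M n) (h : Active n x) : M n :=
  ⟨Φ x.1, by
    intro i hi
    have hv : v2 x.1.2.1 ≠ i := by have := h.2.1; omega
    show (x.1.1 + Finsupp.single (v2 x.1.2.1) 1 : ℕ →₀ ℕ) i = 0
    rw [Finsupp.add_apply, x.2 i hi, Finsupp.single_apply, if_neg hv, add_zero]⟩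

noncomputable def ΨM (n : ℕ) (y : M n) (h : Hit n y) : M n :=
  ⟨(y.1.1 - Finsupp.single (μ y.1.1 h.choose) 1,
    y.1.2.1 - 2 ^ (μ y.1.1 h.choose),
    y.1.2.2 - 2 ^ (μ y.1.1 h.choose + 1) + 1), by
    intro i hi
    show (y.1.1 - Finsupp.single _ 1 : ℕ →₀ ℕ) i = 0
    rw [Finsupp.tsub_apply, y.2 i hi]
    omega⟩

lemma μ_le {n : ℕ} (y : M n) (h : y.1.1 ≠ 0) : μ y.1.1 h ≤ n := by
  by_contra hc
  exact μ_spec h (y.2 _ (by omega))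

lemma hit_ΦM {n : ℕ} {x : M n} (h : Active n x) : Hit n (ΦM n x h) := by
  obtain ⟨hm, hle, hlow⟩ := h
  have hR : (ΦM n x ⟨hm, hle, hlow⟩).1.1 ≠ 0 := by
    intro h0
    have : (x.1.1 + Finsupp.single (v2 x.1.2.1) 1 : ℕ →₀ ℕ) (v2 x.1.2.1) = 0 := by
      rw [show (x.1.1 + Finsupp.single (v2 x.1.2.1) 1 : ℕ →₀ ℕ) = 0 from h0]; rfl
    simp [Finsupp.add_apply, Finsupp.single_apply] at this
  refine ⟨hR, ?_⟩
  have hμ : μ _ hR = v2 x.1.2.1 := μ_add_single hlow hR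
  rw [hμ]
  exact dvd_add_pow hm

lemma μ_hit {n : ℕ} {y : M n} (h : Hit n y) (h' : y.1.1 ≠ 0) :
    (2:ℤ) ^ (μ y.1.1 h' + 1) ∣ y.1.2.1 := h.choose_spec

lemma active_ΨM {n : ℕ} {y : M n} (h : Hit n y) : Active n (ΨM n y h) := by
  obtain ⟨hR, hdvd⟩ := h
  set s := μ y.1.1 hR with hs
  have hdvd' : (2:ℤ) ^ (s + 1) ∣ y.1.2.1 := hdvd
  have hm : y.1.2.1 - 2 ^ s ≠ 0 := sub_pow_ne_zero hdvd'
  have hv : v2 (y.1.2.1 - 2 ^ s) = s := v2_sub_pow hdvd'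
  refine ⟨hm, ?_, ?_⟩
  · show v2 (y.1.2.1 - 2 ^ s) ≤ n
    rw [hv]
    exact μ_le y hR
  · intro i hi
    have hi' : i < s := by
      have : v2 (y.1.2.1 - 2 ^ s) = s := hv
      exact lt_of_lt_of_eq (by exact lt_of_lt_of_eq hi (by rw [show v2 ((ΨM n y ⟨hR, hdvd⟩).1.2.1) = v2 (y.1.2.1 - 2 ^ s) from rfl, hv])) rfl
    show (y.1.1 - Finsupp.single s 1 : ℕ →₀ ℕ) i = 0
    rw [Finsupp.tsub_apply, μ_min hR hi']
    omega

lemma ΦΨ {n : ℕ} {y : M n} (h : Hit n y) : ΦM n (ΨM n y h) (active_ΨM h) = y := by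
  obtain ⟨hR, hdvd⟩ := h
  set s := μ y.1.1 hR with hs
  have hdvd' : (2:ℤ) ^ (s + 1) ∣ y.1.2.1 := hdvd
  have hv : v2 (y.1.2.1 - 2 ^ s) = s := v2_sub_pow hdvd'
  apply Subtype.ext
  show (((y.1.1 - Finsupp.single s 1 : ℕ →₀ ℕ) + Finsupp.single (v2 (y.1.2.1 - 2 ^ s)) 1 : ℕ →₀ ℕ),
    (y.1.2.1 - 2 ^ s) + 2 ^ (v2 (y.1.2.1 - 2 ^ s)),
    (y.1.2.2 - 2 ^ (s + 1) + 1) + 2 ^ (v2 (y.1.2.1 - 2 ^ s) + 1) - 1) = y.1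
  rw [hv]
  refine Prod.ext ?_ (Prod.ext ?_ ?_)
  · ext i
    have hspec : y.1.1 s ≠ 0 := μ_spec hR
    by_cases hi : i = s
    · subst hi
      simp [Finsupp.add_apply, Finsupp.tsub_apply, Finsupp.single_apply]
      omega
    · simp only [Finsupp.add_apply, Finsupp.tsub_apply, Finsupp.single_apply,
        if_neg (fun hh : s = i => hi hh.symm)]
      omega
  · show y.1.2.1 - 2 ^ s + 2 ^ s = y.1.2.1
    ring
  · show y.1.2.2 - 2 ^ (s + 1) + 1 + 2 ^ (s + 1) - 1 = y.1.2.2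
    ring

lemma ΨΦ {n : ℕ} {x : M n} (h : Active n x) : ΨM n (ΦM n x h) (hit_ΦM h) = x := by
  set s := v2 x.1.2.1 with hs
  have hne : (ΦM n x h).1.1 ≠ 0 := (hit_ΦM h).choose
  have hμ : μ (ΦM n x h).1.1 (hit_ΦM h).choose = s := μ_add_single h.2.2 hne
  apply Subtype.ext
  have key : ∀ (pr : (ΦM n x h).1.1 ≠ 0), μ (ΦM n x h).1.1 pr = s := fun _ => hμ
  show (((x.1.1 + Finsupp.single s 1 : ℕ →₀ ℕ) - Finsupp.single (μ (ΦM n x h).1.1 (hit_ΦM h).choose) 1 : ℕ →₀ ℕ),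
    (x.1.2.1 + 2 ^ s) - 2 ^ (μ (ΦM n x h).1.1 (hit_ΦM h).choose),
    (x.1.2.2 + 2 ^ (s + 1) - 1) - 2 ^ (μ (ΦM n x h).1.1 (hit_ΦM h).choose + 1) + 1) = x.1
  rw [hμ]
  refine Prod.ext ?_ (Prod.ext ?_ ?_)
  · ext i
    simp only [Finsupp.tsub_apply, Finsupp.add_apply]
    omega
  · show x.1.2.1 + 2 ^ s - 2 ^ s = x.1.2.1
    ring
  · show x.1.2.2 + 2 ^ (s + 1) - 1 - 2 ^ (s + 1) + 1 = x.1.2.2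
    ring

lemma hit_not_active {n : ℕ} {y : M n} (h : Hit n y) : ¬ Active n y := by
  rintro ⟨hm, hle, hlow⟩
  obtain ⟨hR, hdvd⟩ := h
  have h1 : μ y.1.1 hR + 1 ≤ v2 y.1.2.1 := (dvd_iff_le_v2.mp hdvd).resolve_left hm
  exact μ_spec hR (hlow _ (by omega))

lemma not_active_not_hit_surv {n : ℕ} {z : M n} (h1 : ¬ Active n z) (h2 : ¬ Hit n z) :
    Surv n z := by
  by_cases hR : z.1.1 = 0
  · refine ⟨hR, ?_⟩
    by_contra hdvd
    have hm : z.1.2.1 ≠ 0 := fun h0 => hdvd (h0 ▸ dvd_zero _)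
    have hle : ¬ (n + 1 ≤ v2 z.1.2.1) := fun hle => hdvd (dvd_iff_le_v2.mpr (Or.inr hle))
    exact h1 ⟨hm, by omega, fun i _ => by rw [hR]; rfl⟩
  · exfalso
    apply h2
    refine ⟨hR, ?_⟩
    by_contra hdvd
    have hm : z.1.2.1 ≠ 0 := fun h0 => hdvd (h0 ▸ dvd_zero _)
    have hv : v2 z.1.2.1 ≤ μ z.1.1 hR := by
      have := (dvd_iff_le_v2 (m := z.1.2.1) (s := μ z.1.1 hR + 1)).not.mp hdvd
      push_neg at this
      omega
    exact h1 ⟨hm, le_trans hv (μ_le z hR), fun i hi => μ_min hR (by omega)⟩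

-- given defs
abbrev V (n : ℕ) : Type := M n →₀ ZMod 2

open Classical in
noncomputable def d (n : ℕ) : V n →ₗ[ZMod 2] V n :=
  Finsupp.lift (V n) (ZMod 2) (M n) fun x =>
    if h : x.1.2.1 ≠ 0 ∧ v2 x.1.2.1 ≤ n ∧ ∀ i < v2 x.1.2.1, x.1.1 i = 0 then
      Finsupp.single
        ⟨Φ x.1, by
          intro i hi
          have hv : v2 x.1.2.1 ≠ i := by omega
          show ((x.1.1 + Finsupp.single (v2 x.1.2.1) 1 : ℕ →₀ ℕ)) i = 0
          rw [Finsupp.add_apply, x.2 i hi, Finsupp.single_apply, if_neg hv, add_zero]⟩ 1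
    else 0

abbrev TateHomology (n : ℕ) : Type :=
  @HasQuotient.Quotient _ _
    (Submodule.hasQuotient (M := LinearMap.ker (d n)) (R := ZMod 2))
    (Submodule.comap (LinearMap.ker (d n)).subtype (LinearMap.range (d n)))

noncomputable def survivor (n : ℕ) (k t : ℤ) : V n :=
  Finsupp.single ⟨((0 : ℕ →₀ ℕ), 2 ^ (n + 1) * k, t), fun _ _ => rfl⟩ (1 : ZMod 2)

-- generator functions
open Classical in
noncomputable def Fd (n : ℕ) : M n → V n :=
  fun x => if h : Active n x then Finsupp.single (ΦM n x h) 1 else 0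

lemma d_apply {n : ℕ} (l : V n) : d n l = l.sum fun x c => c • Fd n x := by
  rw [d, Finsupp.lift_apply]
  congr 1

-- coefficient extraction
lemma lift_coeff {α β : Type*} (l : α →₀ ZMod 2) (F : α → (β →₀ ZMod 2)) (b : β) (a : α)
    (hFa : F a b = 1) (hu : ∀ a', F a' b ≠ 0 → a' = a) :
    (l.sum fun x c => c • F x) b = l a := by
  classical
  rw [Finsupp.sum, Finset.sum_apply']
  rw [Finset.sum_eq_single a]
  · simp [hFa]
  · intro x hx hxa
    have hz : F x b = 0 := by_contra fun hh => hxa (hu x hh)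
    simp [hz]
  · intro ha
    simp [Finsupp.notMem_support_iff.mp ha]

lemma lift_coeff_zero {α β : Type*} (l : α →₀ ZMod 2) (F : α → (β →₀ ZMod 2)) (b : β)
    (h : ∀ a, F a b = 0) :
    (l.sum fun x c => c • F x) b = 0 := by
  rw [Finsupp.sum, Finset.sum_apply']
  exact Finset.sum_eq_zero fun x _ => by simp [h x]

lemma d_single {n : ℕ} (x : M n) : d n (Finsupp.single x (1 : ZMod 2)) = Fd n x := by
  rw [d_apply, Finsupp.sum_single_index (by simp), one_smul]

lemma Fd_pos {n : ℕ} {x : M n} (h : Active n x) : Fd n x = Finsupp.single (ΦM n x h) 1 :=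
  dif_pos h

lemma Fd_neg {n : ℕ} {x : M n} (h : ¬ Active n x) : Fd n x = 0 := dif_neg h

lemma d_comp_d (n : ℕ) : d n ∘ₗ d n = 0 := by
  apply Finsupp.lhom_ext
  intro a b
  have hb : Finsupp.single a b = b • Finsupp.single a (1 : ZMod 2) := by
    rw [Finsupp.smul_single, smul_eq_mul, mul_one]
  simp only [LinearMap.comp_apply, LinearMap.zero_apply, hb, map_smul]
  rw [d_single]
  by_cases h : Active n a
  · rw [Fd_pos h, d_single, Fd_neg (hit_not_active (hit_ΦM h)), smul_zero]
  · rw [Fd_neg h, map_zero, smul_zero]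

open Classical in
noncomputable def Fq (n : ℕ) : M n → ((ℤ × ℤ) →₀ ZMod 2) :=
  fun x => if Surv n x then Finsupp.single (x.1.2.1 / 2 ^ (n+1), x.1.2.2) 1 else 0

noncomputable def q (n : ℕ) : V n →ₗ[ZMod 2] ((ℤ × ℤ) →₀ ZMod 2) :=
  Finsupp.lift _ _ _ (Fq n)

lemma q_apply {n : ℕ} (l : V n) : q n l = l.sum fun x c => c • Fq n x := by
  rw [q, Finsupp.lift_apply]

lemma q_single {n : ℕ} (x : M n) : q n (Finsupp.single x (1 : ZMod 2)) = Fq n x := by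
  rw [q_apply, Finsupp.sum_single_index (by simp), one_smul]

open Classical in
noncomputable def FΨ (n : ℕ) : M n → V n :=
  fun y => if h : Hit n y then Finsupp.single (ΨM n y h) 1 else 0

noncomputable def Ψmap (n : ℕ) : V n →ₗ[ZMod 2] V n := Finsupp.lift _ _ _ (FΨ n)

lemma Ψmap_apply {n : ℕ} (l : V n) : Ψmap n l = l.sum fun x c => c • FΨ n x := by
  rw [Ψmap, Finsupp.lift_apply]

lemma Ψmap_single {n : ℕ} (x : M n) : Ψmap n (Finsupp.single x (1 : ZMod 2)) = FΨ n x := by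
  rw [Ψmap_apply, Finsupp.sum_single_index (by simp), one_smul]

lemma surv_mem_ker {n : ℕ} (k t : ℤ) : survivor n k t ∈ LinearMap.ker (d n) := by
  rw [LinearMap.mem_ker, survivor]; refine (d_single (n := n) ⟨_, fun _ _ => rfl⟩).trans ?_; refine Fd_neg ?_
  rintro ⟨hm, hle, -⟩
  by_cases hk : k = 0
  · exact hm (by simp [hk])
  · have := v2_big (n := n) hk
    have hle' : v2 (2 ^ (n+1) * k) ≤ n := hle
    omega

open Classical in
noncomputable def Ψ' (n : ℕ) : M n → M n := fun y => if h : Hit n y then ΨM n y h else y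

lemma Ψ'_eq {n : ℕ} {y : M n} (h : Hit n y) : Ψ' n y = ΨM n y h := dif_pos h

lemma ΨΦ' {n : ℕ} {x : M n} (h : Active n x) : Ψ' n (ΦM n x h) = x := by
  rw [Ψ'_eq (hit_ΦM h)]; exact ΨΦ h

lemma ΦM_inj {n : ℕ} {x x' : M n} (h : Active n x) (h' : Active n x')
    (he : ΦM n x h = ΦM n x' h') : x = x' := by
  rw [← ΨΦ' h, ← ΨΦ' h', he]

lemma Fq_pos {n : ℕ} {x : M n} (h : Surv n x) :
    Fq n x = Finsupp.single (x.1.2.1 / 2 ^ (n+1), x.1.2.2) 1 := if_pos h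

lemma Fq_neg {n : ℕ} {x : M n} (h : ¬ Surv n x) : Fq n x = 0 := if_neg h

lemma hit_not_surv {n : ℕ} {y : M n} (h : Hit n y) : ¬ Surv n y := fun hs => h.choose hs.1

lemma q_comp_d (n : ℕ) : q n ∘ₗ d n = 0 := by
  apply Finsupp.lhom_ext
  intro a b
  have hb : Finsupp.single a b = b • Finsupp.single a (1 : ZMod 2) := by
    rw [Finsupp.smul_single, smul_eq_mul, mul_one]
  simp only [LinearMap.comp_apply, LinearMap.zero_apply, hb, map_smul]
  rw [d_single]
  by_cases h : Active n a
  · rw [Fd_pos h, q_single, Fq_neg (hit_not_surv (hit_ΦM h)), smul_zero]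
  · rw [Fd_neg h, map_zero, smul_zero]

lemma ker_coeff_active {n : ℕ} {v : V n} (hv : d n v = 0) {x : M n} (h : Active n x) :
    v x = 0 := by
  have key := lift_coeff v (Fd n) (ΦM n x h) x
    (by rw [Fd_pos h]; exact Finsupp.single_eq_same)
    (by
      intro a' ha'
      by_cases h' : Active n a'
      · rw [Fd_pos h'] at ha'
        have he : ΦM n a' h' = ΦM n x h := by
          by_contra hne
          exact ha' (Finsupp.single_eq_of_ne' hne)
        exact ΦM_inj h' h he
      · exact absurd (by rw [Fd_neg h']; rfl) ha')
  rw [← d_apply, hv] at key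
  exact key.symm

lemma ker_coeff_surv {n : ℕ} {v : V n} (hq : q n v = 0) {x : M n} (h : Surv n x) :
    v x = 0 := by
  have key := lift_coeff v (Fq n) (x.1.2.1 / 2 ^ (n+1), x.1.2.2) x
    (by rw [Fq_pos h]; exact Finsupp.single_eq_same)
    (by
      intro a' ha'
      by_cases h' : Surv n a'
      · rw [Fq_pos h'] at ha'
        have he : ((a'.1.2.1 / 2 ^ (n+1) : ℤ), a'.1.2.2) = ((x.1.2.1 / 2 ^ (n+1) : ℤ), x.1.2.2) := by
          by_contra hne
          exact ha' (Finsupp.single_eq_of_ne' hne)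
        have h1 : a'.1.2.1 / 2 ^ (n+1) = x.1.2.1 / 2 ^ (n+1) := (Prod.ext_iff.mp he).1
        have h2 : a'.1.2.2 = x.1.2.2 := (Prod.ext_iff.mp he).2
        have hm : a'.1.2.1 = x.1.2.1 := by
          rw [← Int.ediv_mul_cancel h'.2, ← Int.ediv_mul_cancel h.2, h1]
        apply Subtype.ext
        exact Prod.ext (h'.1.trans h.1.symm) (Prod.ext hm h2)
      · exact absurd (by rw [Fq_neg h']; rfl) ha')
  rw [← q_apply, hq] at key
  exact key.symm

open Classical in
lemma d_FΨ {n : ℕ} (y : M n) :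
    d n (FΨ n y) = if Hit n y then Finsupp.single y (1 : ZMod 2) else 0 := by
  by_cases h : Hit n y
  · rw [FΨ, dif_pos h, if_pos h, d_single, Fd_pos (active_ΨM h), ΦΨ h]
  · rw [FΨ, dif_neg h, if_neg h, map_zero]

open Classical in
lemma d_Ψmap {n : ℕ} {v : V n} (hd : d n v = 0) (hq : q n v = 0) :
    d n (Ψmap n v) = v := by
  rw [Ψmap_apply, map_finsuppSum]
  simp only [map_smul, d_FΨ]
  apply Finsupp.ext
  intro z
  by_cases hz : Hit n z
  · rw [lift_coeff v _ z z (by rw [if_pos hz]; exact Finsupp.single_eq_same)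
      (by
        intro a' ha'
        by_cases h' : Hit n a'
        · rw [if_pos h'] at ha'
          by_contra hne
          exact ha' (Finsupp.single_eq_of_ne' hne)
        · rw [if_neg h'] at ha'
          exact absurd rfl ha')]
  · rw [lift_coeff_zero v _ z
      (by
        intro a
        by_cases h' : Hit n a
        · rw [if_pos h']
          exact Finsupp.single_eq_of_ne' (fun e : a = z => hz (e ▸ h'))
        · rw [if_neg h']; rfl)]
    by_cases ha : Active n z
    · exact (ker_coeff_active hd ha).symm
    · exact (ker_coeff_surv hq (not_active_not_hit_surv ha hz)).symm

noncomputable def π (n : ℕ) : LinearMap.ker (d n) →ₗ[ZMod 2] ((ℤ × ℤ) →₀ ZMod 2) :=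
  q n ∘ₗ (LinearMap.ker (d n)).subtype

lemma q_survivor {n : ℕ} (k t : ℤ) :
    q n (survivor n k t) = Finsupp.single (k, t) (1 : ZMod 2) := by
  rw [survivor]; refine (q_single (n := n) ⟨_, fun _ _ => rfl⟩).trans ?_; refine (Fq_pos (x := ⟨_, fun _ _ => rfl⟩) ⟨rfl, ⟨k, rfl⟩⟩).trans ?_
  congr 1
  show ((2 ^ (n+1) * k / 2 ^ (n+1) : ℤ), t) = (k, t)
  rw [Int.mul_ediv_cancel_left _ (by positivity)]

noncomputable def σmap (n : ℕ) : ((ℤ × ℤ) →₀ ZMod 2) →ₗ[ZMod 2] LinearMap.ker (d n) :=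
  Finsupp.lift _ _ _ fun p => ⟨survivor n p.1 p.2, surv_mem_ker p.1 p.2⟩

lemma π_σ (n : ℕ) : π n ∘ₗ σmap n = LinearMap.id := by
  apply Finsupp.lhom_ext
  intro p b
  have hb : Finsupp.single p b = b • Finsupp.single p (1 : ZMod 2) := by
    rw [Finsupp.smul_single, smul_eq_mul, mul_one]
  have hσ : σmap n (Finsupp.single p (1 : ZMod 2)) =
      ⟨survivor n p.1 p.2, surv_mem_ker p.1 p.2⟩ := by
    rw [σmap, Finsupp.lift_apply, Finsupp.sum_single_index (by simp), one_smul]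
  simp only [LinearMap.comp_apply, LinearMap.id_apply, hb, map_smul, hσ]
  have : π n ⟨survivor n p.1 p.2, surv_mem_ker p.1 p.2⟩ = Finsupp.single p 1 := by
    rw [π, LinearMap.comp_apply]
    show q n (survivor n p.1 p.2) = _
    rw [q_survivor]
  rw [this]

lemma π_surj (n : ℕ) : Function.Surjective (π n) := fun w =>
  ⟨σmap n w, by have := LinearMap.congr_fun (π_σ n) w; simpa using this⟩

lemma hker (n : ℕ) :
    Submodule.comap (LinearMap.ker (d n)).subtype (LinearMap.range (d n)) =
      LinearMap.ker (π n) := by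
  ext v
  simp only [Submodule.mem_comap, LinearMap.mem_range, LinearMap.mem_ker, π,
    LinearMap.comp_apply, Submodule.coe_subtype]
  constructor
  · rintro ⟨w, hw⟩
    rw [← hw]
    exact LinearMap.congr_fun (q_comp_d n) w
  · intro hq
    exact ⟨Ψmap n v.1, d_Ψmap (LinearMap.mem_ker.mp v.2) hq⟩

noncomputable def πbar (n : ℕ) :
    TateHomology n →ₗ[ZMod 2] ((ℤ × ℤ) →₀ ZMod 2) :=
  Submodule.liftQ _ (π n) (hker n).le

noncomputable def E (n : ℕ) : TateHomology n ≃ₗ[ZMod 2] ((ℤ × ℤ) →₀ ZMod 2) :=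
  LinearEquiv.ofBijective (πbar n)
    ⟨LinearMap.ker_eq_bot.mp (Submodule.ker_liftQ_eq_bot _ _ _ (hker n).ge),
     fun w => by
      obtain ⟨u, hu⟩ := π_surj n w
      exact ⟨Submodule.Quotient.mk u, by rw [πbar, Submodule.liftQ_apply]; exact hu⟩⟩

theorem tate_homology_BPRn (n : ℕ) :
    d n ∘ₗ d n = 0 ∧
    ∃ b : Module.Basis (ℤ × ℤ) (ZMod 2) (TateHomology n),
      (∀ k t : ℤ,
        ∃ h : survivor n k t ∈ LinearMap.ker (d n),
          b (k, t) = Submodule.Quotient.mk ⟨survivor n k t, h⟩) ∧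
      Nonempty (TateHomology n ≃ₗ[ZMod 2] AddMonoidAlgebra (ZMod 2) (ℤ × ℤ)) := by
  refine ⟨d_comp_d n, Finsupp.basisSingleOne.map (E n).symm, ?_, ?_⟩
  · intro k t
    refine ⟨surv_mem_ker k t, ?_⟩
    rw [Module.Basis.map_apply]
    rw [LinearEquiv.symm_apply_eq]
    have h1 : (E n) (Submodule.Quotient.mk ⟨survivor n k t, surv_mem_ker k t⟩) =
        π n ⟨survivor n k t, surv_mem_ker k t⟩ := by
      show πbar n _ = _; rw [πbar, Submodule.liftQ_apply]
    rw [h1]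
    show Finsupp.basisSingleOne (k, t) = q n (survivor n k t)
    rw [q_survivor]
    simp
  · exact ⟨(E n).trans (AddMonoidAlgebra.coeffLinearEquiv (ZMod 2)).symm⟩
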